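/- arXiv:1805.03826 — 3 statements merged into one kernel-verified Lean document; each statement's English description precedes it below -/
import Mathlib

section
/- Burchnall–Chaundy expansion: for x, y in a suitable neighborhood of 0, the Appell function satisfies F_2(a; b_1, b_2; c_1, c_2; x, y) = ∑_{k=0}^∞ (a)_k (b_1)_k (b_2)_k / (k! (c_1)_k (c_2)_k) x^k y^k F(a+k, b_1+k; c_1+k; x) F(a+k, b_2+k; c_2+k; y), where both sides converge absolutely. -/
open Complex

/-- Compatibility: the complex absolute value as an `AbsoluteValue`, equal to the norm. -/
noncomputable def Complex.abs : AbsoluteValue ℂ ℝ where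
  toFun z := ‖z‖
  map_mul' := norm_mul
  nonneg' := norm_nonneg
  eq_zero' _ := norm_eq_zero
  add_le' := norm_add_le

@[simp] lemma Complex.abs_natCast (n : ℕ) : Complex.abs (n : ℂ) = n := Complex.norm_natCast n

lemma Complex.norm_eq_abs (z : ℂ) : ‖z‖ = Complex.abs z := rfl

private lemma poch_eval_add (m n : ℕ) (z : ℂ) :
    (ascPochhammer ℂ (m + n)).eval z
      = (ascPochhammer ℂ m).eval z * (ascPochhammer ℂ n).eval (z + m) := by
  have h := congrArg (Polynomial.eval z) (ascPochhammer_mul (S := ℂ) m n)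
  simpa [Polynomial.eval_comp] using h.symm

private lemma poch_succ_left_eval (n : ℕ) (z : ℂ) :
    (ascPochhammer ℂ (n + 1)).eval z = z * (ascPochhammer ℂ n).eval (z + 1) := by
  have h := poch_eval_add 1 n z
  rw [add_comm] at h
  simpa [ascPochhammer_one] using h

private lemma poch_ne_zero {c : ℂ} (hc : ∀ l : ℕ, c ≠ -(l : ℂ)) (k i : ℕ) :
    (ascPochhammer ℂ i).eval (c + k) ≠ 0 := by
  induction i with
  | zero => simp
  | succ i ih =>
    rw [ascPochhammer_succ_eval]
    refine mul_ne_zero ih fun h => hc (k + i) ?_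
    push_cast
    linear_combination h

private lemma poch_abs_le (z : ℂ) (k i : ℕ) :
    Complex.abs ((ascPochhammer ℂ i).eval (z + k))
      ≤ (Complex.abs z + 1) ^ i * ((k + 1).ascFactorial i) := by
  induction i with
  | zero => simp
  | succ i ih =>
    rw [ascPochhammer_succ_eval, map_mul, Nat.ascFactorial_succ]
    have h1 : Complex.abs (z + k + i) ≤ (Complex.abs z + 1) * ((k + 1 + i : ℕ) : ℝ) := by
      have := Complex.abs.add_le (z + k) i
      have h2 : Complex.abs ((k : ℂ)) = (k : ℝ) := by simp
      have h3 : Complex.abs ((i : ℂ)) = (i : ℝ) := by simp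
      have h4 := Complex.abs.add_le z (k : ℂ)
      push_cast
      nlinarith [Complex.abs.nonneg z, Nat.cast_nonneg (α := ℝ) k, Nat.cast_nonneg (α := ℝ) i]
    calc Complex.abs ((ascPochhammer ℂ i).eval (z + k)) * Complex.abs (z + k + i)
        ≤ ((Complex.abs z + 1) ^ i * ((k + 1).ascFactorial i))
            * ((Complex.abs z + 1) * ((k + 1 + i : ℕ) : ℝ)) := by
          apply mul_le_mul ih h1 (Complex.abs.nonneg _) (by positivity)
      _ = (Complex.abs z + 1) ^ (i + 1) * (((k + 1 + i) * (k + 1).ascFactorial i : ℕ) : ℝ) := by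
          push_cast; ring

private lemma poch_abs_ge {c : ℂ} {δ : ℝ} (hδ0 : 0 ≤ δ)
    (hδ : ∀ l : ℕ, δ * (l + 1) ≤ Complex.abs (c + l)) (k i : ℕ) :
    δ ^ i * ((k + 1).ascFactorial i) ≤ Complex.abs ((ascPochhammer ℂ i).eval (c + k)) := by
  induction i with
  | zero => simp
  | succ i ih =>
    rw [ascPochhammer_succ_eval, map_mul, Nat.ascFactorial_succ]
    have h1 : δ * ((k + 1 + i : ℕ) : ℝ) ≤ Complex.abs (c + k + i) := by
      have := hδ (k + i)
      have he : c + ((k + i : ℕ) : ℂ) = c + k + i := by push_cast; ring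
      rw [he] at this
      calc δ * ((k + 1 + i : ℕ) : ℝ) = δ * (((k + i : ℕ) : ℝ) + 1) := by push_cast; ring
        _ ≤ _ := this
    calc δ ^ (i + 1) * (((k + 1 + i) * (k + 1).ascFactorial i : ℕ) : ℝ)
        = (δ ^ i * ((k + 1).ascFactorial i)) * (δ * ((k + 1 + i : ℕ) : ℝ)) := by push_cast; ring
      _ ≤ Complex.abs ((ascPochhammer ℂ i).eval (c + k)) * Complex.abs (c + k + i) := by
          apply mul_le_mul ih h1 (by positivity) (Complex.abs.nonneg _)

private lemma ascFactorial_le (k i : ℕ) :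
    (((k + 1).ascFactorial i : ℕ) : ℝ) ≤ (i.factorial : ℝ) * 2 ^ (k + i) := by
  rw [Nat.ascFactorial_eq_factorial_mul_choose]
  have h : (k + i).choose i ≤ 2 ^ (k + i) := by
    calc (k + i).choose i ≤ ∑ m ∈ Finset.range (k + i + 1), (k + i).choose m :=
          Finset.single_le_sum (fun _ _ => Nat.zero_le _) (Finset.mem_range.mpr (by omega))
      _ = 2 ^ (k + i) := Nat.sum_range_choose _
    
  have h2 := (Nat.cast_le (α := ℝ)).mpr h
  push_cast at h2 ⊢
  nlinarith [Nat.cast_pos (α := ℝ).mpr i.factorial_pos]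

private lemma exists_delta {c : ℂ} (hc : ∀ l : ℕ, c ≠ -(l : ℂ)) :
    ∃ δ : ℝ, 0 < δ ∧ δ ≤ 1 ∧ ∀ l : ℕ, δ * (l + 1) ≤ Complex.abs (c + l) := by
  have habs : ∀ l : ℕ, 0 < Complex.abs (c + l) := fun l => by
    rw [AbsoluteValue.pos_iff]
    intro h
    exact hc l (by linear_combination h)
  set L : ℕ := ⌈2 * Complex.abs c⌉₊ + 1 with hL
  have hne : (Finset.range L).Nonempty := ⟨0, Finset.mem_range.mpr (by omega)⟩
  set m : ℝ := (Finset.range L).inf' hne (fun l => Complex.abs (c + l) / (l + 1)) with hm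
  have hmpos : 0 < m := by
    rw [hm, Finset.lt_inf'_iff]
    intro l _
    exact div_pos (habs l) (by positivity)
  refine ⟨min (min m (1/4)) 1, by positivity, min_le_right _ _, fun l => ?_⟩
  by_cases hl : l < L
  · have h1 : m ≤ Complex.abs (c + l) / (l + 1) :=
      Finset.inf'_le _ (Finset.mem_range.mpr hl)
    have h2 : min (min m (1/4)) 1 ≤ m := le_trans (min_le_left _ _) (min_le_left _ _)
    have hp : (0:ℝ) < (l:ℝ) + 1 := by positivity
    calc min (min m (1/4)) 1 * ((l:ℝ) + 1) ≤ (Complex.abs (c + l) / (l + 1)) * ((l:ℝ) + 1) := by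
          apply mul_le_mul_of_nonneg_right (le_trans h2 h1) (by positivity)
      _ = Complex.abs (c + l) := by field_simp
  · push_neg at hl
    have hcl : 2 * Complex.abs c + 1 ≤ (l : ℝ) := by
      have : ((L : ℕ) : ℝ) ≤ l := Nat.cast_le.mpr hl
      rw [hL] at this
      push_cast at this
      nlinarith [Nat.le_ceil (2 * Complex.abs c)]
    have h3 : (l : ℝ) - Complex.abs c ≤ Complex.abs (c + l) := by
      have h4 : Complex.abs ((l : ℂ)) ≤ Complex.abs (c + l) + Complex.abs c := by
        calc Complex.abs ((l : ℂ)) = Complex.abs ((c + l) + (-c)) := by congr 1; ring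
          _ ≤ Complex.abs (c + l) + Complex.abs (-c) := Complex.abs.add_le _ _
          _ = Complex.abs (c + l) + Complex.abs c := by rw [map_neg_eq_map]
      have h5 : Complex.abs ((l : ℂ)) = (l : ℝ) := by simp
      rw [h5] at h4
      linarith
    have h5 : min (min m (1/4)) 1 ≤ 1/4 := le_trans (min_le_left _ _) (min_le_right _ _)
    have h6 : (0:ℝ) ≤ (l:ℝ) + 1 := by positivity
    nlinarith [Complex.abs.nonneg c, hmpos]
private lemma bc_comb (m : ℕ) : ∀ (n : ℕ) (a : ℂ),
    ∑ k ∈ Finset.range (n + 1),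
      (m.choose k : ℂ) * (n.choose k : ℂ) * (k.factorial : ℂ) *
        (ascPochhammer ℂ (n - k)).eval (a + k)
      = (ascPochhammer ℂ n).eval (a + m) := by
  induction m with
  | zero =>
    intro n a
    rw [Finset.sum_eq_single 0]
    · simp
    · intro k _ hk0
      rw [Nat.choose_eq_zero_of_lt (Nat.pos_of_ne_zero hk0)]
      simp
    · intro h
      exact absurd (Finset.mem_range.mpr (Nat.succ_pos n)) h
  | succ m ih =>
    intro n a
    cases n with
    | zero => simp
    | succ n =>
      set t : ℕ → ℂ := fun k =>
        ((n+1).choose k : ℂ) * (k.factorial : ℂ) *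
          (ascPochhammer ℂ (n + 1 - k)).eval (a + k) with ht
      have hform : ∀ M : ℕ, ∑ k ∈ Finset.range (n + 1 + 1),
          (M.choose k : ℂ) * ((n+1).choose k : ℂ) * (k.factorial : ℂ) *
            (ascPochhammer ℂ (n + 1 - k)).eval (a + k)
          = ∑ k ∈ Finset.range (n + 1 + 1), (M.choose k : ℂ) * t k := by
        intro M
        apply Finset.sum_congr rfl
        intro k _
        rw [ht]
        ring
      have hstep : ∑ k ∈ Finset.range (n + 1 + 1), ((m+1).choose k : ℂ) * t k
          = ∑ k ∈ Finset.range (n + 1 + 1), (m.choose k : ℂ) * t k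
            + ∑ k ∈ Finset.range (n + 1), (m.choose k : ℂ) * t (k+1) := by
        rw [Finset.sum_range_succ' (fun k => ((m+1).choose k : ℂ) * t k) (n+1),
          Finset.sum_range_succ' (fun k => ((m).choose k : ℂ) * t k) (n+1)]
        have hp : ∀ k, ((m+1).choose (k+1) : ℂ) * t (k+1)
            = (m.choose (k+1) : ℂ) * t (k+1) + (m.choose k : ℂ) * t (k+1) := by
          intro k
          rw [Nat.choose_succ_succ]
          push_cast
          ring
        rw [Finset.sum_congr rfl (fun k _ => hp k), Finset.sum_add_distrib]
        simp only [Nat.choose_zero_right]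
        ring
      have hsecond : ∑ k ∈ Finset.range (n + 1), (m.choose k : ℂ) * t (k+1)
          = ((n : ℂ) + 1) * (ascPochhammer ℂ n).eval ((a + 1) + m) := by
        rw [← ih n (a+1), Finset.mul_sum]
        apply Finset.sum_congr rfl
        intro k _
        rw [ht]
        simp only []
        have hn : ((n+1).choose (k+1) : ℂ) * (((k+1).factorial : ℕ) : ℂ)
            = ((n : ℂ) + 1) * (n.choose k : ℂ) * (k.factorial : ℂ) := by
          have h' := Nat.add_one_mul_choose_eq n k
          have h2 : (((n+1).choose (k+1) * (k+1) : ℕ) : ℂ) = ((n.succ * n.choose k : ℕ) : ℂ) := by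
            rw [h']
          push_cast at h2
          have h3 : (((k+1).factorial : ℕ) : ℂ) = ((k:ℂ)+1) * (k.factorial : ℂ) := by
            rw [Nat.factorial_succ]; push_cast; ring
          rw [h3]
          calc ((n+1).choose (k+1) : ℂ) * (((k:ℂ)+1) * (k.factorial : ℂ))
              = (((n+1).choose (k+1) : ℂ) * ((k:ℂ)+1)) * (k.factorial : ℂ) := by ring
            _ = (((n:ℂ)+1) * (n.choose k : ℂ)) * (k.factorial : ℂ) := by rw [h2]
            _ = _ := by ring
        have hsub : n + 1 - (k + 1) = n - k := by omega
        have heval : a + ((k:ℕ)+1 : ℕ) = (a + 1) + (k : ℂ) := by push_cast; ring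
        rw [hsub, heval, hn]
        ring
      rw [hform (m+1), hstep, hsecond, ← hform m, ih (n+1) a]
      have e1 : (ascPochhammer ℂ (n+1)).eval (a + m) = (a + m) * (ascPochhammer ℂ n).eval (a + m + 1) :=
        poch_succ_left_eval n (a + m)
      have e2 : (ascPochhammer ℂ (n+1)).eval (a + ((m:ℕ)+1 : ℕ))
          = (ascPochhammer ℂ n).eval (a + m + 1) * ((a + m + 1) + n) := by
        rw [ascPochhammer_succ_eval]
        push_cast
        ring_nf
      have e3 : (a + 1) + (m : ℂ) = a + (m : ℂ) + 1 := by ring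
      rw [e1, e2, e3]
      ring
private lemma poch_abs_le0 (z : ℂ) (i : ℕ) :
    Complex.abs ((ascPochhammer ℂ i).eval z)
      ≤ (Complex.abs z + 1) ^ i * (i.factorial : ℝ) := by
  have h := poch_abs_le z 0 i
  simpa [Nat.one_ascFactorial] using h

private lemma poch_abs_ge0 {c : ℂ} {δ : ℝ} (hδ0 : 0 ≤ δ)
    (hδ : ∀ l : ℕ, δ * (l + 1) ≤ Complex.abs (c + l)) (i : ℕ) :
    δ ^ i * (i.factorial : ℝ) ≤ Complex.abs ((ascPochhammer ℂ i).eval c) := by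
  have h := poch_abs_ge hδ0 hδ 0 i
  simpa [Nat.one_ascFactorial] using h

private lemma poch_pos {c : ℂ} {δ : ℝ} (hδ0 : 0 < δ)
    (hδ : ∀ l : ℕ, δ * (l + 1) ≤ Complex.abs (c + l)) (k i : ℕ) :
    0 < Complex.abs ((ascPochhammer ℂ i).eval (c + k)) :=
  lt_of_lt_of_le (by positivity) (poch_abs_ge hδ0.le hδ k i)

private lemma gauss_term_bound {α β γ : ℂ} {δ : ℝ} (hδpos : 0 < δ)
    (hδ : ∀ l : ℕ, δ * (l + 1) ≤ Complex.abs (γ + l)) (x : ℂ) (k i : ℕ) :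
    Complex.abs ((ascPochhammer ℂ i).eval (α + k) * (ascPochhammer ℂ i).eval (β + k) * x ^ i /
      ((i.factorial : ℂ) * (ascPochhammer ℂ i).eval (γ + k)))
      ≤ 2 ^ k * (2 * ((Complex.abs α + 1) * (Complex.abs β + 1)) * Complex.abs x / δ) ^ i := by
  set A := Complex.abs α + 1 with hA
  set B := Complex.abs β + 1 with hB
  set F : ℝ := (((k + 1).ascFactorial i : ℕ) : ℝ) with hF
  have hFpos : (0:ℝ) < F := by
    rw [hF]; exact_mod_cast Nat.ascFactorial_pos k i
  have hfac : (0:ℝ) < (i.factorial : ℝ) := by exact_mod_cast i.factorial_pos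
  simp only [map_mul, map_div₀, map_pow, Complex.abs_natCast]
  have hnum : Complex.abs ((ascPochhammer ℂ i).eval (α + k)) *
        Complex.abs ((ascPochhammer ℂ i).eval (β + k)) * Complex.abs x ^ i
      ≤ (A ^ i * F) * (B ^ i * F) * Complex.abs x ^ i := by
    apply mul_le_mul_of_nonneg_right _ (by positivity)
    apply mul_le_mul (poch_abs_le α k i) (poch_abs_le β k i) (Complex.abs.nonneg _) (by positivity)
  have hden : (i.factorial : ℝ) * (δ ^ i * F)
      ≤ (i.factorial : ℝ) * Complex.abs ((ascPochhammer ℂ i).eval (γ + k)) :=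
    mul_le_mul_of_nonneg_left (poch_abs_ge hδpos.le hδ k i) hfac.le
  calc Complex.abs ((ascPochhammer ℂ i).eval (α + k)) *
        Complex.abs ((ascPochhammer ℂ i).eval (β + k)) * Complex.abs x ^ i /
        ((i.factorial : ℝ) * Complex.abs ((ascPochhammer ℂ i).eval (γ + k)))
      ≤ ((A ^ i * F) * (B ^ i * F) * Complex.abs x ^ i) / ((i.factorial : ℝ) * (δ ^ i * F)) :=
        div_le_div₀ (by positivity) hnum (by positivity) hden
    _ = (A * B * Complex.abs x / δ) ^ i * (F / (i.factorial : ℝ)) := by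
        simp only [div_pow, mul_pow]
        field_simp
    _ ≤ (A * B * Complex.abs x / δ) ^ i * ((2:ℝ) ^ (k + i)) := by
        apply mul_le_mul_of_nonneg_left _ (by positivity)
        rw [div_le_iff₀ hfac, hF]
        calc (((k + 1).ascFactorial i : ℕ) : ℝ) ≤ (i.factorial : ℝ) * 2 ^ (k + i) :=
              ascFactorial_le k i
          _ = 2 ^ (k + i) * (i.factorial : ℝ) := by ring
    _ = 2 ^ k * (2 * (A * B) * Complex.abs x / δ) ^ i := by
        simp only [div_pow, mul_pow, pow_add]
        field_simp

private lemma ck_bound {α β1 β2 γ1 γ2 : ℂ} {δ1 δ2 : ℝ} (hδ1 : 0 < δ1) (hδ2 : 0 < δ2)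
    (h1 : ∀ l : ℕ, δ1 * (l + 1) ≤ Complex.abs (γ1 + l))
    (h2 : ∀ l : ℕ, δ2 * (l + 1) ≤ Complex.abs (γ2 + l)) (x y : ℂ) (k : ℕ) :
    Complex.abs ((ascPochhammer ℂ k).eval α * (ascPochhammer ℂ k).eval β1 *
        (ascPochhammer ℂ k).eval β2 /
        ((k.factorial : ℂ) * (ascPochhammer ℂ k).eval γ1 * (ascPochhammer ℂ k).eval γ2)
        * x ^ k * y ^ k)
      ≤ ((Complex.abs α + 1) * (Complex.abs β1 + 1) * (Complex.abs β2 + 1)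
          * Complex.abs x * Complex.abs y / (δ1 * δ2)) ^ k := by
  set A := Complex.abs α + 1
  set B1 := Complex.abs β1 + 1
  set B2 := Complex.abs β2 + 1
  have hfac : (0:ℝ) < (k.factorial : ℝ) := by exact_mod_cast k.factorial_pos
  simp only [map_mul, map_div₀, map_pow, Complex.abs_natCast]
  have hnum : Complex.abs ((ascPochhammer ℂ k).eval α) *
        Complex.abs ((ascPochhammer ℂ k).eval β1) * Complex.abs ((ascPochhammer ℂ k).eval β2)
      ≤ (A ^ k * (k.factorial : ℝ)) * (B1 ^ k * (k.factorial : ℝ)) *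
        (B2 ^ k * (k.factorial : ℝ)) := by
    apply mul_le_mul _ (poch_abs_le0 β2 k) (Complex.abs.nonneg _) (by positivity)
    apply mul_le_mul (poch_abs_le0 α k) (poch_abs_le0 β1 k) (Complex.abs.nonneg _) (by positivity)
  have hden : (k.factorial : ℝ) * (δ1 ^ k * (k.factorial : ℝ)) * (δ2 ^ k * (k.factorial : ℝ))
      ≤ (k.factorial : ℝ) * Complex.abs ((ascPochhammer ℂ k).eval γ1) *
        Complex.abs ((ascPochhammer ℂ k).eval γ2) := by
    apply mul_le_mul _ (poch_abs_ge0 hδ2.le h2 k) (by positivity) (by positivity)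
    exact mul_le_mul_of_nonneg_left (poch_abs_ge0 hδ1.le h1 k) hfac.le
  calc Complex.abs ((ascPochhammer ℂ k).eval α) * Complex.abs ((ascPochhammer ℂ k).eval β1) *
        Complex.abs ((ascPochhammer ℂ k).eval β2) /
        ((k.factorial : ℝ) * Complex.abs ((ascPochhammer ℂ k).eval γ1) *
          Complex.abs ((ascPochhammer ℂ k).eval γ2)) *
        Complex.abs x ^ k * Complex.abs y ^ k
      ≤ ((A ^ k * (k.factorial : ℝ)) * (B1 ^ k * (k.factorial : ℝ)) *
          (B2 ^ k * (k.factorial : ℝ))) /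
          ((k.factorial : ℝ) * (δ1 ^ k * (k.factorial : ℝ)) * (δ2 ^ k * (k.factorial : ℝ)))
          * Complex.abs x ^ k * Complex.abs y ^ k := by
        apply mul_le_mul_of_nonneg_right _ (by positivity)
        apply mul_le_mul_of_nonneg_right _ (by positivity)
        exact div_le_div₀ (by positivity) hnum (by positivity) hden
    _ = (A * B1 * B2 * Complex.abs x * Complex.abs y / (δ1 * δ2)) ^ k := by
        simp only [div_pow, mul_pow]
        field_simp

private lemma T_bound {α β1 β2 γ1 γ2 : ℂ} {δ1 δ2 : ℝ} (hδ1 : 0 < δ1) (hδ2 : 0 < δ2)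
    (h1 : ∀ l : ℕ, δ1 * (l + 1) ≤ Complex.abs (γ1 + l))
    (h2 : ∀ l : ℕ, δ2 * (l + 1) ≤ Complex.abs (γ2 + l)) (x y : ℂ) (i j : ℕ) :
    Complex.abs ((ascPochhammer ℂ (i + j)).eval α *
        (ascPochhammer ℂ i).eval β1 * (ascPochhammer ℂ j).eval β2 * x ^ i * y ^ j /
        ((i.factorial : ℂ) * (j.factorial : ℂ) *
          (ascPochhammer ℂ i).eval γ1 * (ascPochhammer ℂ j).eval γ2))
      ≤ (2 * ((Complex.abs α + 1) * (Complex.abs β1 + 1)) * Complex.abs x / δ1) ^ i *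
        (2 * ((Complex.abs α + 1) * (Complex.abs β2 + 1)) * Complex.abs y / δ2) ^ j := by
  set A := Complex.abs α + 1
  set B1 := Complex.abs β1 + 1
  set B2 := Complex.abs β2 + 1
  have hfi : (0:ℝ) < (i.factorial : ℝ) := by exact_mod_cast i.factorial_pos
  have hfj : (0:ℝ) < (j.factorial : ℝ) := by exact_mod_cast j.factorial_pos
  have hbin : ((i + j).factorial : ℝ) ≤ (i.factorial : ℝ) * (j.factorial : ℝ) * 2 ^ (i + j) := by
    have he : ((i + j).factorial : ℝ) = (i.factorial : ℝ) * (((i+1).ascFactorial j : ℕ) : ℝ) := by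
      rw [← Nat.cast_mul, Nat.factorial_mul_ascFactorial]
    rw [he]
    calc (i.factorial : ℝ) * (((i+1).ascFactorial j : ℕ) : ℝ)
        ≤ (i.factorial : ℝ) * ((j.factorial : ℝ) * 2 ^ (i + j)) :=
          mul_le_mul_of_nonneg_left (ascFactorial_le i j) hfi.le
      _ = (i.factorial : ℝ) * (j.factorial : ℝ) * 2 ^ (i + j) := by ring
  simp only [map_mul, map_div₀, map_pow, Complex.abs_natCast]
  have hnum : Complex.abs ((ascPochhammer ℂ (i+j)).eval α) *
        Complex.abs ((ascPochhammer ℂ i).eval β1) * Complex.abs ((ascPochhammer ℂ j).eval β2) *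
        Complex.abs x ^ i * Complex.abs y ^ j
      ≤ (A ^ (i+j) * ((i+j).factorial : ℝ)) * (B1 ^ i * (i.factorial : ℝ)) *
        (B2 ^ j * (j.factorial : ℝ)) * Complex.abs x ^ i * Complex.abs y ^ j := by
    apply mul_le_mul_of_nonneg_right _ (by positivity)
    apply mul_le_mul_of_nonneg_right _ (by positivity)
    apply mul_le_mul _ (poch_abs_le0 β2 j) (Complex.abs.nonneg _) (by positivity)
    apply mul_le_mul (poch_abs_le0 α (i+j)) (poch_abs_le0 β1 i) (Complex.abs.nonneg _)
      (by positivity)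
  have hden : (i.factorial : ℝ) * (j.factorial : ℝ) * (δ1 ^ i * (i.factorial : ℝ)) *
        (δ2 ^ j * (j.factorial : ℝ))
      ≤ (i.factorial : ℝ) * (j.factorial : ℝ) *
        Complex.abs ((ascPochhammer ℂ i).eval γ1) *
        Complex.abs ((ascPochhammer ℂ j).eval γ2) := by
    apply mul_le_mul _ (poch_abs_ge0 hδ2.le h2 j) (by positivity) (by positivity)
    exact mul_le_mul_of_nonneg_left (poch_abs_ge0 hδ1.le h1 i) (by positivity)
  calc Complex.abs ((ascPochhammer ℂ (i+j)).eval α) *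
        Complex.abs ((ascPochhammer ℂ i).eval β1) * Complex.abs ((ascPochhammer ℂ j).eval β2) *
        Complex.abs x ^ i * Complex.abs y ^ j /
        ((i.factorial : ℝ) * (j.factorial : ℝ) *
          Complex.abs ((ascPochhammer ℂ i).eval γ1) *
          Complex.abs ((ascPochhammer ℂ j).eval γ2))
      ≤ ((A ^ (i+j) * ((i+j).factorial : ℝ)) * (B1 ^ i * (i.factorial : ℝ)) *
          (B2 ^ j * (j.factorial : ℝ)) * Complex.abs x ^ i * Complex.abs y ^ j) /
          ((i.factorial : ℝ) * (j.factorial : ℝ) * (δ1 ^ i * (i.factorial : ℝ)) *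
            (δ2 ^ j * (j.factorial : ℝ))) :=
        div_le_div₀ (by positivity) hnum (by positivity) hden
    _ = (A * B1 * Complex.abs x / δ1) ^ i * (A * B2 * Complex.abs y / δ2) ^ j *
          (((i+j).factorial : ℝ) / ((i.factorial : ℝ) * (j.factorial : ℝ))) := by
        simp only [div_pow, mul_pow, pow_add]
        field_simp
    _ ≤ (A * B1 * Complex.abs x / δ1) ^ i * (A * B2 * Complex.abs y / δ2) ^ j *
          ((2:ℝ) ^ (i + j)) := by
        apply mul_le_mul_of_nonneg_left _ (by positivity)
        rw [div_le_iff₀ (by positivity)]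
        calc ((i+j).factorial : ℝ) ≤ (i.factorial : ℝ) * (j.factorial : ℝ) * 2 ^ (i+j) := hbin
          _ = 2 ^ (i+j) * ((i.factorial : ℝ) * (j.factorial : ℝ)) := by ring
    _ = (2 * (A * B1) * Complex.abs x / δ1) ^ i * (2 * (A * B2) * Complex.abs y / δ2) ^ j := by
        simp only [div_pow, mul_pow, pow_add]
        field_simp
private lemma g_term_eq {a b1 b2 c1 c2 : ℂ} (x y : ℂ)
    (hc1 : ∀ l : ℕ, c1 ≠ -(l : ℂ)) (hc2 : ∀ l : ℕ, c2 ≠ -(l : ℂ)) (k i j : ℕ) :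
    (ascPochhammer ℂ k).eval a * (ascPochhammer ℂ k).eval b1 * (ascPochhammer ℂ k).eval b2 /
        ((k.factorial : ℂ) * (ascPochhammer ℂ k).eval c1 * (ascPochhammer ℂ k).eval c2)
      * x ^ k * y ^ k *
      ((ascPochhammer ℂ i).eval (a + k) * (ascPochhammer ℂ i).eval (b1 + k) * x ^ i /
        ((i.factorial : ℂ) * (ascPochhammer ℂ i).eval (c1 + k))) *
      ((ascPochhammer ℂ j).eval (a + k) * (ascPochhammer ℂ j).eval (b2 + k) * y ^ j /
        ((j.factorial : ℂ) * (ascPochhammer ℂ j).eval (c2 + k)))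
    = (ascPochhammer ℂ (k+i)).eval a * (ascPochhammer ℂ (k+i)).eval b1 *
        (ascPochhammer ℂ (k+j)).eval b2 * x ^ (k+i) * y ^ (k+j) /
        (((k+i).factorial : ℂ) * ((k+j).factorial : ℂ) *
          (ascPochhammer ℂ (k+i)).eval c1 * (ascPochhammer ℂ (k+j)).eval c2) *
      (((k+i).choose k : ℂ) * (((k+j).choose k : ℂ)) * (k.factorial : ℂ) *
        (ascPochhammer ℂ j).eval (a + k)) := by
  have e1 := poch_eval_add k i a
  have e2 := poch_eval_add k i b1
  have e3 := poch_eval_add k j b2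
  have e4 := poch_eval_add k i c1
  have e5 := poch_eval_add k j c2
  have hf1 : (((k+i).factorial : ℕ) : ℂ)
      = (((k+i).choose k : ℕ) : ℂ) * (k.factorial : ℂ) * (i.factorial : ℂ) := by
    rw [← Nat.cast_mul, ← Nat.cast_mul]
    congr 1
    rw [← Nat.choose_mul_factorial_mul_factorial (Nat.le_add_right k i),
      Nat.add_sub_cancel_left]
  have hf2 : (((k+j).factorial : ℕ) : ℂ)
      = (((k+j).choose k : ℕ) : ℂ) * (k.factorial : ℂ) * (j.factorial : ℂ) := by
    rw [← Nat.cast_mul, ← Nat.cast_mul]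
    congr 1
    rw [← Nat.choose_mul_factorial_mul_factorial (Nat.le_add_right k j),
      Nat.add_sub_cancel_left]
  have hch1 : (((k+i).choose k : ℕ) : ℂ) ≠ 0 := by
    exact_mod_cast Nat.cast_ne_zero.mpr (Nat.choose_pos (Nat.le_add_right k i)).ne'
  have hch2 : (((k+j).choose k : ℕ) : ℂ) ≠ 0 := by
    exact_mod_cast Nat.cast_ne_zero.mpr (Nat.choose_pos (Nat.le_add_right k j)).ne'
  have hk : (k.factorial : ℂ) ≠ 0 := Nat.cast_ne_zero.mpr k.factorial_pos.ne'
  have hi : (i.factorial : ℂ) ≠ 0 := Nat.cast_ne_zero.mpr i.factorial_pos.ne'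
  have hj : (j.factorial : ℂ) ≠ 0 := Nat.cast_ne_zero.mpr j.factorial_pos.ne'
  have hc1k : (ascPochhammer ℂ k).eval c1 ≠ 0 := by
    have := poch_ne_zero hc1 0 k
    simpa using this
  have hc2k : (ascPochhammer ℂ k).eval c2 ≠ 0 := by
    have := poch_ne_zero hc2 0 k
    simpa using this
  have hc1i : (ascPochhammer ℂ i).eval (c1 + k) ≠ 0 := poch_ne_zero hc1 k i
  have hc2j : (ascPochhammer ℂ j).eval (c2 + k) ≠ 0 := poch_ne_zero hc2 k j
  have hx : x ^ (k + i) = x ^ k * x ^ i := pow_add x k i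
  have hy : y ^ (k + j) = y ^ k * y ^ j := pow_add y k j
  rw [e1, e2, e3, e4, e5, hf1, hf2, hx, hy]
  simp only [div_mul_eq_mul_div, mul_div_assoc', div_div, div_mul_div_comm]
  rw [div_eq_div_iff (by (repeat' apply mul_ne_zero) <;> assumption)
    (by (repeat' apply mul_ne_zero) <;> assumption)]
  ring
/-- The Gauss hypergeometric series. -/
noncomputable def gaussF (a b c x : ℂ) : ℂ :=
  ∑' k : ℕ,
    (ascPochhammer ℂ k).eval a * (ascPochhammer ℂ k).eval b * x ^ k /
      ((Nat.factorial k : ℂ) * (ascPochhammer ℂ k).eval c)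

/-- The Appell hypergeometric series F₂. -/
noncomputable def appellF2 (a b1 b2 c1 c2 x y : ℂ) : ℂ :=
  ∑' p : ℕ × ℕ,
    (ascPochhammer ℂ (p.1 + p.2)).eval a *
      (ascPochhammer ℂ p.1).eval b1 * (ascPochhammer ℂ p.2).eval b2 * x ^ p.1 * y ^ p.2 /
      ((Nat.factorial p.1 : ℂ) * (Nat.factorial p.2 : ℂ) *
        (ascPochhammer ℂ p.1).eval c1 * (ascPochhammer ℂ p.2).eval c2)

/-- The k-th term of the Burchnall–Chaundy expansion of F₂. -/
noncomputable def bcTerm (a b1 b2 c1 c2 x y : ℂ) (k : ℕ) : ℂ :=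
  (ascPochhammer ℂ k).eval a * (ascPochhammer ℂ k).eval b1 * (ascPochhammer ℂ k).eval b2 /
      ((Nat.factorial k : ℂ) * (ascPochhammer ℂ k).eval c1 * (ascPochhammer ℂ k).eval c2) *
    x ^ k * y ^ k *
    gaussF (a + k) (b1 + k) (c1 + k) x * gaussF (a + k) (b2 + k) (c2 + k) y

/-- The triple-indexed family underlying the Burchnall–Chaundy rearrangement. -/
private noncomputable def bcG (a b1 b2 c1 c2 x y : ℂ) (t : ℕ × ℕ × ℕ) : ℂ :=
  (ascPochhammer ℂ t.1).eval a * (ascPochhammer ℂ t.1).eval b1 * (ascPochhammer ℂ t.1).eval b2 /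
      ((t.1.factorial : ℂ) * (ascPochhammer ℂ t.1).eval c1 * (ascPochhammer ℂ t.1).eval c2)
    * x ^ t.1 * y ^ t.1 *
    ((ascPochhammer ℂ t.2.1).eval (a + t.1) * (ascPochhammer ℂ t.2.1).eval (b1 + t.1) * x ^ t.2.1 /
      ((t.2.1.factorial : ℂ) * (ascPochhammer ℂ t.2.1).eval (c1 + t.1))) *
    ((ascPochhammer ℂ t.2.2).eval (a + t.1) * (ascPochhammer ℂ t.2.2).eval (b2 + t.1) * y ^ t.2.2 /
      ((t.2.2.factorial : ℂ) * (ascPochhammer ℂ t.2.2).eval (c2 + t.1)))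
set_option maxHeartbeats 2000000 in
/-- Burchnall–Chaundy expansion: for x, y in a suitable neighborhood of 0,
F₂(a;b₁,b₂;c₁,c₂;x,y) = ∑_k (a)_k(b₁)_k(b₂)_k/(k!(c₁)_k(c₂)_k) xᵏyᵏ
  F(a+k,b₁+k;c₁+k;x) F(a+k,b₂+k;c₂+k;y), both sides converging absolutely. -/
theorem burchnall_chaundy (a b1 b2 c1 c2 : ℂ)
    (hc1 : ∀ l : ℕ, c1 ≠ -(l : ℂ)) (hc2 : ∀ l : ℕ, c2 ≠ -(l : ℂ)) :
    ∃ ε > (0 : ℝ), ∀ x y : ℂ, ‖x‖ < ε → ‖y‖ < ε →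
      (Summable (fun p : ℕ × ℕ => ‖
        ((ascPochhammer ℂ (p.1 + p.2)).eval a *
          (ascPochhammer ℂ p.1).eval b1 * (ascPochhammer ℂ p.2).eval b2 * x ^ p.1 * y ^ p.2 /
          ((Nat.factorial p.1 : ℂ) * (Nat.factorial p.2 : ℂ) *
            (ascPochhammer ℂ p.1).eval c1 * (ascPochhammer ℂ p.2).eval c2))‖)) ∧
      (Summable (fun k : ℕ => ‖bcTerm a b1 b2 c1 c2 x y k‖)) ∧
      appellF2 a b1 b2 c1 c2 x y = ∑' k : ℕ, bcTerm a b1 b2 c1 c2 x y k := by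
  obtain ⟨δ1, hδ1pos, hδ1le, hδ1⟩ := exists_delta hc1
  obtain ⟨δ2, hδ2pos, hδ2le, hδ2⟩ := exists_delta hc2
  have ha0 : (0:ℝ) ≤ Complex.abs a := Complex.abs.nonneg a
  have hb10 : (0:ℝ) ≤ Complex.abs b1 := Complex.abs.nonneg b1
  have hb20 : (0:ℝ) ≤ Complex.abs b2 := Complex.abs.nonneg b2
  have hA1 : (1:ℝ) ≤ Complex.abs a + 1 := by linarith
  have hB11 : (1:ℝ) ≤ Complex.abs b1 + 1 := by linarith
  have hB21 : (1:ℝ) ≤ Complex.abs b2 + 1 := by linarith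
  have hAB1 : (1:ℝ) ≤ (Complex.abs a + 1) * (Complex.abs b1 + 1) := by nlinarith
  have hAB2 : (1:ℝ) ≤ (Complex.abs a + 1) * (Complex.abs b2 + 1) := by nlinarith
  have hQ1 : (1:ℝ) ≤ (Complex.abs a + 1) * (Complex.abs b1 + 1) * (Complex.abs b2 + 1) := by
    nlinarith
  have hQpos : (0:ℝ) < (Complex.abs a + 1) * (Complex.abs b1 + 1) * (Complex.abs b2 + 1) := by
    positivity
  have hQ2 : (1:ℝ) ≤ ((Complex.abs a + 1) * (Complex.abs b1 + 1) * (Complex.abs b2 + 1)) ^ 2 := by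
    nlinarith
  have hAB1Q2 : (Complex.abs a + 1) * (Complex.abs b1 + 1)
      ≤ ((Complex.abs a + 1) * (Complex.abs b1 + 1) * (Complex.abs b2 + 1)) ^ 2 := by
    nlinarith
  have hAB2Q2 : (Complex.abs a + 1) * (Complex.abs b2 + 1)
      ≤ ((Complex.abs a + 1) * (Complex.abs b1 + 1) * (Complex.abs b2 + 1)) ^ 2 := by
    nlinarith
  refine ⟨δ1 * δ2 /
    (16 * ((Complex.abs a + 1) * (Complex.abs b1 + 1) * (Complex.abs b2 + 1)) ^ 2),
    by positivity, fun x y hx hy => ?_⟩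
  have hxa : (0:ℝ) ≤ Complex.abs x := Complex.abs.nonneg x
  have hya : (0:ℝ) ≤ Complex.abs y := Complex.abs.nonneg y
  have hx16 : Complex.abs x *
      (16 * ((Complex.abs a + 1) * (Complex.abs b1 + 1) * (Complex.abs b2 + 1)) ^ 2)
      < δ1 * δ2 := (lt_div_iff₀ (by positivity)).mp hx
  have hy16 : Complex.abs y *
      (16 * ((Complex.abs a + 1) * (Complex.abs b1 + 1) * (Complex.abs b2 + 1)) ^ 2)
      < δ1 * δ2 := (lt_div_iff₀ (by positivity)).mp hy
  have hδ12le1 : δ1 * δ2 ≤ 1 := mul_le_one₀ hδ1le hδ2pos.le hδ2le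
  have hx16' : Complex.abs x * 16 ≤ Complex.abs x *
      (16 * ((Complex.abs a + 1) * (Complex.abs b1 + 1) * (Complex.abs b2 + 1)) ^ 2) := by
    apply mul_le_mul_of_nonneg_left _ hxa
    nlinarith
  have hy16' : Complex.abs y * 16 ≤ Complex.abs y *
      (16 * ((Complex.abs a + 1) * (Complex.abs b1 + 1) * (Complex.abs b2 + 1)) ^ 2) := by
    apply mul_le_mul_of_nonneg_left _ hya
    nlinarith
  have hxle1 : Complex.abs x ≤ 1 := by linarith
  have hyle1 : Complex.abs y ≤ 1 := by linarith
  -- geometric ratios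
  have hq1 : 2 * ((Complex.abs a + 1) * (Complex.abs b1 + 1)) * Complex.abs x / δ1 ≤ 1 / 2 := by
    rw [div_le_iff₀ hδ1pos]
    have h1 : 2 * ((Complex.abs a + 1) * (Complex.abs b1 + 1)) * Complex.abs x
        ≤ 2 * ((Complex.abs a + 1) * (Complex.abs b1 + 1) * (Complex.abs b2 + 1)) ^ 2 *
          Complex.abs x := by
      apply mul_le_mul_of_nonneg_right _ hxa
      linarith
    linarith [hx16, mul_le_mul_of_nonneg_left hδ2le hδ1pos.le, h1]
  have hq2 : 2 * ((Complex.abs a + 1) * (Complex.abs b2 + 1)) * Complex.abs y / δ2 ≤ 1 / 2 := by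
    rw [div_le_iff₀ hδ2pos]
    have h1 : 2 * ((Complex.abs a + 1) * (Complex.abs b2 + 1)) * Complex.abs y
        ≤ 2 * ((Complex.abs a + 1) * (Complex.abs b1 + 1) * (Complex.abs b2 + 1)) ^ 2 *
          Complex.abs y := by
      apply mul_le_mul_of_nonneg_right _ hya
      linarith
    linarith [hy16, mul_le_mul_of_nonneg_left hδ1le hδ2pos.le, h1]
  have hq1nonneg : (0:ℝ) ≤ 2 * ((Complex.abs a + 1) * (Complex.abs b1 + 1)) * Complex.abs x / δ1 := by
    positivity
  have hq2nonneg : (0:ℝ) ≤ 2 * ((Complex.abs a + 1) * (Complex.abs b2 + 1)) * Complex.abs y / δ2 := by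
    positivity
  have hq1lt : 2 * ((Complex.abs a + 1) * (Complex.abs b1 + 1)) * Complex.abs x / δ1 < 1 :=
    lt_of_le_of_lt hq1 (by norm_num)
  have hq2lt : 2 * ((Complex.abs a + 1) * (Complex.abs b2 + 1)) * Complex.abs y / δ2 < 1 :=
    lt_of_le_of_lt hq2 (by norm_num)
  have hsumq1 : Summable (fun i : ℕ =>
      (2 * ((Complex.abs a + 1) * (Complex.abs b1 + 1)) * Complex.abs x / δ1) ^ i) :=
    summable_geometric_of_lt_one hq1nonneg hq1lt
  have hsumq2 : Summable (fun j : ℕ =>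
      (2 * ((Complex.abs a + 1) * (Complex.abs b2 + 1)) * Complex.abs y / δ2) ^ j) :=
    summable_geometric_of_lt_one hq2nonneg hq2lt
  have hrho : (Complex.abs a + 1) * (Complex.abs b1 + 1) * (Complex.abs b2 + 1) *
      Complex.abs x * Complex.abs y / (δ1 * δ2) ≤ 1 / 16 := by
    rw [div_le_iff₀ (mul_pos hδ1pos hδ2pos)]
    have h1 : (Complex.abs a + 1) * (Complex.abs b1 + 1) * (Complex.abs b2 + 1) *
        Complex.abs x * Complex.abs y
        ≤ (Complex.abs a + 1) * (Complex.abs b1 + 1) * (Complex.abs b2 + 1) *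
          Complex.abs x * 1 := by
      apply mul_le_mul_of_nonneg_left hyle1 (by positivity)
    have hQQ2 : Complex.abs x *
        (16 * ((Complex.abs a + 1) * (Complex.abs b1 + 1) * (Complex.abs b2 + 1)))
        ≤ Complex.abs x *
          (16 * ((Complex.abs a + 1) * (Complex.abs b1 + 1) * (Complex.abs b2 + 1)) ^ 2) := by
      apply mul_le_mul_of_nonneg_left _ hxa
      nlinarith [hQ1, hQpos.le]
    have h2 : ((Complex.abs a + 1) * (Complex.abs b1 + 1) * (Complex.abs b2 + 1)) *
        Complex.abs x * 16 ≤ δ1 * δ2 := by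
      linarith [hx16, hQQ2]
    linarith [h1, h2]
  have hrhononneg : (0:ℝ) ≤ (Complex.abs a + 1) * (Complex.abs b1 + 1) * (Complex.abs b2 + 1) *
      Complex.abs x * Complex.abs y / (δ1 * δ2) := by positivity
  have hsum4rho : Summable (fun k : ℕ =>
      (4 * ((Complex.abs a + 1) * (Complex.abs b1 + 1) * (Complex.abs b2 + 1) *
        Complex.abs x * Complex.abs y / (δ1 * δ2))) ^ k) := by
    apply summable_geometric_of_lt_one (by positivity)
    linarith [hrho]
  -- (1) summability of the double series
  have hTs : Summable (fun p : ℕ × ℕ => Complex.abs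
      ((ascPochhammer ℂ (p.1 + p.2)).eval a *
        (ascPochhammer ℂ p.1).eval b1 * (ascPochhammer ℂ p.2).eval b2 * x ^ p.1 * y ^ p.2 /
        ((Nat.factorial p.1 : ℂ) * (Nat.factorial p.2 : ℂ) *
          (ascPochhammer ℂ p.1).eval c1 * (ascPochhammer ℂ p.2).eval c2))) := by
    have hb := fun p : ℕ × ℕ =>
      T_bound (α := a) (β1 := b1) (β2 := b2) hδ1pos hδ2pos hδ1 hδ2 x y p.1 p.2
    have hs := hsumq1.mul_of_nonneg hsumq2 (fun i => by positivity) (fun j => by positivity)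
    exact Summable.of_nonneg_of_le (fun p => Complex.abs.nonneg _) hb hs
  -- gauss factor bounds
  have husum : ∀ k : ℕ, Summable (fun i : ℕ => Complex.abs
      ((ascPochhammer ℂ i).eval (a + k) * (ascPochhammer ℂ i).eval (b1 + k) * x ^ i /
        ((Nat.factorial i : ℂ) * (ascPochhammer ℂ i).eval (c1 + k)))) := by
    intro k
    have hb := fun i : ℕ => gauss_term_bound (α := a) (β := b1) hδ1pos hδ1 x k i
    exact Summable.of_nonneg_of_le (fun i => Complex.abs.nonneg _) hb (hsumq1.mul_left _)
  have hvsum : ∀ k : ℕ, Summable (fun j : ℕ => Complex.abs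
      ((ascPochhammer ℂ j).eval (a + k) * (ascPochhammer ℂ j).eval (b2 + k) * y ^ j /
        ((Nat.factorial j : ℂ) * (ascPochhammer ℂ j).eval (c2 + k)))) := by
    intro k
    have hb := fun j : ℕ => gauss_term_bound (α := a) (β := b2) hδ2pos hδ2 y k j
    exact Summable.of_nonneg_of_le (fun j => Complex.abs.nonneg _) hb (hsumq2.mul_left _)
  have husum' : ∀ k : ℕ, Summable (fun i : ℕ =>
      ‖(ascPochhammer ℂ i).eval (a + k) * (ascPochhammer ℂ i).eval (b1 + k) * x ^ i /
        ((Nat.factorial i : ℂ) * (ascPochhammer ℂ i).eval (c1 + k))‖) := by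
    intro k
    simpa [Complex.norm_eq_abs] using husum k
  have hvsum' : ∀ k : ℕ, Summable (fun j : ℕ =>
      ‖(ascPochhammer ℂ j).eval (a + k) * (ascPochhammer ℂ j).eval (b2 + k) * y ^ j /
        ((Nat.factorial j : ℂ) * (ascPochhammer ℂ j).eval (c2 + k))‖) := by
    intro k
    simpa [Complex.norm_eq_abs] using hvsum k
  have hinv1 : (1 - 2 * ((Complex.abs a + 1) * (Complex.abs b1 + 1)) * Complex.abs x / δ1)⁻¹
      ≤ 2 := by
    have h12 : (1:ℝ)/2 ≤ 1 - 2 * ((Complex.abs a + 1) * (Complex.abs b1 + 1)) *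
        Complex.abs x / δ1 := by linarith
    calc (1 - 2 * ((Complex.abs a + 1) * (Complex.abs b1 + 1)) * Complex.abs x / δ1)⁻¹
        ≤ ((1:ℝ)/2)⁻¹ := by
          apply inv_anti₀ (by norm_num) h12
      _ = 2 := by norm_num
  have hinv2 : (1 - 2 * ((Complex.abs a + 1) * (Complex.abs b2 + 1)) * Complex.abs y / δ2)⁻¹
      ≤ 2 := by
    have h12 : (1:ℝ)/2 ≤ 1 - 2 * ((Complex.abs a + 1) * (Complex.abs b2 + 1)) *
        Complex.abs y / δ2 := by linarith
    calc (1 - 2 * ((Complex.abs a + 1) * (Complex.abs b2 + 1)) * Complex.abs y / δ2)⁻¹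
        ≤ ((1:ℝ)/2)⁻¹ := by
          apply inv_anti₀ (by norm_num) h12
      _ = 2 := by norm_num
  have hG1 : ∀ k : ℕ, Complex.abs (gaussF (a + k) (b1 + k) (c1 + k) x) ≤ 2 ^ k * 2 := by
    intro k
    rw [gaussF]
    calc Complex.abs (∑' i : ℕ,
          (ascPochhammer ℂ i).eval (a + k) * (ascPochhammer ℂ i).eval (b1 + k) * x ^ i /
            ((Nat.factorial i : ℂ) * (ascPochhammer ℂ i).eval (c1 + k)))
        ≤ ∑' i : ℕ, Complex.abs
            ((ascPochhammer ℂ i).eval (a + k) * (ascPochhammer ℂ i).eval (b1 + k) * x ^ i /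
              ((Nat.factorial i : ℂ) * (ascPochhammer ℂ i).eval (c1 + k))) := by
          have := norm_tsum_le_tsum_norm (husum' k)
          simpa [Complex.norm_eq_abs] using this
      _ ≤ ∑' i : ℕ, 2 ^ k *
            (2 * ((Complex.abs a + 1) * (Complex.abs b1 + 1)) * Complex.abs x / δ1) ^ i := by
          apply Summable.tsum_le_tsum (fun i => gauss_term_bound hδ1pos hδ1 x k i) (husum k)
            (hsumq1.mul_left _)
      _ = 2 ^ k * ∑' i : ℕ,
            (2 * ((Complex.abs a + 1) * (Complex.abs b1 + 1)) * Complex.abs x / δ1) ^ i :=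
          tsum_mul_left
      _ ≤ 2 ^ k * 2 := by
          rw [tsum_geometric_of_lt_one hq1nonneg hq1lt]
          exact mul_le_mul_of_nonneg_left hinv1 (by positivity)
  have hG2 : ∀ k : ℕ, Complex.abs (gaussF (a + k) (b2 + k) (c2 + k) y) ≤ 2 ^ k * 2 := by
    intro k
    rw [gaussF]
    calc Complex.abs (∑' j : ℕ,
          (ascPochhammer ℂ j).eval (a + k) * (ascPochhammer ℂ j).eval (b2 + k) * y ^ j /
            ((Nat.factorial j : ℂ) * (ascPochhammer ℂ j).eval (c2 + k)))
        ≤ ∑' j : ℕ, Complex.abs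
            ((ascPochhammer ℂ j).eval (a + k) * (ascPochhammer ℂ j).eval (b2 + k) * y ^ j /
              ((Nat.factorial j : ℂ) * (ascPochhammer ℂ j).eval (c2 + k))) := by
          have := norm_tsum_le_tsum_norm (hvsum' k)
          simpa [Complex.norm_eq_abs] using this
      _ ≤ ∑' j : ℕ, 2 ^ k *
            (2 * ((Complex.abs a + 1) * (Complex.abs b2 + 1)) * Complex.abs y / δ2) ^ j := by
          apply Summable.tsum_le_tsum (fun j => gauss_term_bound hδ2pos hδ2 y k j) (hvsum k)
            (hsumq2.mul_left _)
      _ = 2 ^ k * ∑' j : ℕ,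
            (2 * ((Complex.abs a + 1) * (Complex.abs b2 + 1)) * Complex.abs y / δ2) ^ j :=
          tsum_mul_left
      _ ≤ 2 ^ k * 2 := by
          rw [tsum_geometric_of_lt_one hq2nonneg hq2lt]
          exact mul_le_mul_of_nonneg_left hinv2 (by positivity)
  -- (2) summability of the bcTerm series
  have hfour : ∀ k : ℕ, ((4:ℝ) ^ k) = 2 ^ k * 2 ^ k := by
    intro k
    rw [← mul_pow]
    norm_num
  have hbcle : ∀ k : ℕ, Complex.abs (bcTerm a b1 b2 c1 c2 x y k)
      ≤ (4 * ((Complex.abs a + 1) * (Complex.abs b1 + 1) * (Complex.abs b2 + 1) *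
          Complex.abs x * Complex.abs y / (δ1 * δ2))) ^ k * 4 := by
    intro k
    rw [bcTerm, map_mul, map_mul]
    calc Complex.abs ((ascPochhammer ℂ k).eval a * (ascPochhammer ℂ k).eval b1 *
            (ascPochhammer ℂ k).eval b2 /
            ((Nat.factorial k : ℂ) * (ascPochhammer ℂ k).eval c1 *
              (ascPochhammer ℂ k).eval c2) * x ^ k * y ^ k) *
          Complex.abs (gaussF (a + k) (b1 + k) (c1 + k) x) *
          Complex.abs (gaussF (a + k) (b2 + k) (c2 + k) y)
        ≤ (((Complex.abs a + 1) * (Complex.abs b1 + 1) * (Complex.abs b2 + 1) *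
            Complex.abs x * Complex.abs y / (δ1 * δ2)) ^ k) * (2 ^ k * 2) * (2 ^ k * 2) := by
          apply mul_le_mul _ (hG2 k) (Complex.abs.nonneg _) (by positivity)
          apply mul_le_mul _ (hG1 k) (Complex.abs.nonneg _) (by positivity)
          exact ck_bound hδ1pos hδ2pos hδ1 hδ2 x y k
      _ = (4 * ((Complex.abs a + 1) * (Complex.abs b1 + 1) * (Complex.abs b2 + 1) *
            Complex.abs x * Complex.abs y / (δ1 * δ2))) ^ k * 4 := by
          rw [mul_pow, hfour k]
          ring
  have hbc : Summable (fun k : ℕ => Complex.abs (bcTerm a b1 b2 c1 c2 x y k)) :=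
    Summable.of_nonneg_of_le (fun k => Complex.abs.nonneg _) hbcle (hsum4rho.mul_right 4)
  -- (4) summability of the triple family
  have hgle : ∀ t : ℕ × ℕ × ℕ, Complex.abs (bcG a b1 b2 c1 c2 x y t)
      ≤ (4 * ((Complex.abs a + 1) * (Complex.abs b1 + 1) * (Complex.abs b2 + 1) *
          Complex.abs x * Complex.abs y / (δ1 * δ2))) ^ t.1 *
        ((2 * ((Complex.abs a + 1) * (Complex.abs b1 + 1)) * Complex.abs x / δ1) ^ t.2.1 *
          (2 * ((Complex.abs a + 1) * (Complex.abs b2 + 1)) * Complex.abs y / δ2) ^ t.2.2) := by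
    rintro ⟨k, i, j⟩
    rw [bcG, map_mul, map_mul]
    calc Complex.abs ((ascPochhammer ℂ k).eval a * (ascPochhammer ℂ k).eval b1 *
            (ascPochhammer ℂ k).eval b2 /
            ((Nat.factorial k : ℂ) * (ascPochhammer ℂ k).eval c1 *
              (ascPochhammer ℂ k).eval c2) * x ^ k * y ^ k) *
          Complex.abs ((ascPochhammer ℂ i).eval (a + k) * (ascPochhammer ℂ i).eval (b1 + k) *
            x ^ i / ((Nat.factorial i : ℂ) * (ascPochhammer ℂ i).eval (c1 + k))) *
          Complex.abs ((ascPochhammer ℂ j).eval (a + k) * (ascPochhammer ℂ j).eval (b2 + k) *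
            y ^ j / ((Nat.factorial j : ℂ) * (ascPochhammer ℂ j).eval (c2 + k)))
        ≤ (((Complex.abs a + 1) * (Complex.abs b1 + 1) * (Complex.abs b2 + 1) *
            Complex.abs x * Complex.abs y / (δ1 * δ2)) ^ k) *
          (2 ^ k * (2 * ((Complex.abs a + 1) * (Complex.abs b1 + 1)) *
            Complex.abs x / δ1) ^ i) *
          (2 ^ k * (2 * ((Complex.abs a + 1) * (Complex.abs b2 + 1)) *
            Complex.abs y / δ2) ^ j) := by
          apply mul_le_mul _ (gauss_term_bound hδ2pos hδ2 y k j) (Complex.abs.nonneg _)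
            (by positivity)
          apply mul_le_mul _ (gauss_term_bound hδ1pos hδ1 x k i) (Complex.abs.nonneg _)
            (by positivity)
          exact ck_bound hδ1pos hδ2pos hδ1 hδ2 x y k
      _ = (4 * ((Complex.abs a + 1) * (Complex.abs b1 + 1) * (Complex.abs b2 + 1) *
            Complex.abs x * Complex.abs y / (δ1 * δ2))) ^ k *
          ((2 * ((Complex.abs a + 1) * (Complex.abs b1 + 1)) * Complex.abs x / δ1) ^ i *
            (2 * ((Complex.abs a + 1) * (Complex.abs b2 + 1)) * Complex.abs y / δ2) ^ j) := by
          rw [mul_pow, hfour k]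
          ring
  have hgabs : Summable (fun t : ℕ × ℕ × ℕ => Complex.abs (bcG a b1 b2 c1 c2 x y t)) := by
    have hs := hsum4rho.mul_of_nonneg
      (hsumq1.mul_of_nonneg hsumq2 (fun i => by positivity) (fun j => by positivity))
      (fun k => by positivity) (fun p => by positivity)
    exact Summable.of_nonneg_of_le (fun t => Complex.abs.nonneg _) hgle hs
  have hg : Summable (bcG a b1 b2 c1 c2 x y) := by
    apply Summable.of_norm
    simpa [Complex.norm_eq_abs] using hgabs
  -- finite-sum identity per (m, n)
  have hTsum : ∀ m n : ℕ,
      (ascPochhammer ℂ (m + n)).eval a * (ascPochhammer ℂ m).eval b1 *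
        (ascPochhammer ℂ n).eval b2 * x ^ m * y ^ n /
        ((Nat.factorial m : ℂ) * (Nat.factorial n : ℂ) *
          (ascPochhammer ℂ m).eval c1 * (ascPochhammer ℂ n).eval c2)
      = ∑ k ∈ Finset.range (min m n + 1), bcG a b1 b2 c1 c2 x y (k, m - k, n - k) := by
    intro m n
    have hres : (ascPochhammer ℂ n).eval (a + m)
        = ∑ k ∈ Finset.range (min m n + 1),
            (m.choose k : ℂ) * (n.choose k : ℂ) * (k.factorial : ℂ) *
              (ascPochhammer ℂ (n - k)).eval (a + k) := by
      rw [← bc_comb m n a]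
      refine (Finset.sum_subset (Finset.range_subset_range.mpr (by omega)) ?_).symm
      intro k hk hk2
      have hm : m < k := by
        rw [Finset.mem_range] at hk hk2
        omega
      rw [Nat.choose_eq_zero_of_lt hm]
      simp
    calc (ascPochhammer ℂ (m + n)).eval a * (ascPochhammer ℂ m).eval b1 *
          (ascPochhammer ℂ n).eval b2 * x ^ m * y ^ n /
          ((Nat.factorial m : ℂ) * (Nat.factorial n : ℂ) *
            (ascPochhammer ℂ m).eval c1 * (ascPochhammer ℂ n).eval c2)
        = ((ascPochhammer ℂ m).eval a * (ascPochhammer ℂ m).eval b1 *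
            (ascPochhammer ℂ n).eval b2 * x ^ m * y ^ n /
            ((Nat.factorial m : ℂ) * (Nat.factorial n : ℂ) *
              (ascPochhammer ℂ m).eval c1 * (ascPochhammer ℂ n).eval c2)) *
          (ascPochhammer ℂ n).eval (a + m) := by
          rw [poch_eval_add m n a]
          ring
      _ = ∑ k ∈ Finset.range (min m n + 1),
            ((ascPochhammer ℂ m).eval a * (ascPochhammer ℂ m).eval b1 *
              (ascPochhammer ℂ n).eval b2 * x ^ m * y ^ n /
              ((Nat.factorial m : ℂ) * (Nat.factorial n : ℂ) *
                (ascPochhammer ℂ m).eval c1 * (ascPochhammer ℂ n).eval c2)) *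
            ((m.choose k : ℂ) * (n.choose k : ℂ) * (k.factorial : ℂ) *
              (ascPochhammer ℂ (n - k)).eval (a + k)) := by
          rw [hres, Finset.mul_sum]
      _ = ∑ k ∈ Finset.range (min m n + 1), bcG a b1 b2 c1 c2 x y (k, m - k, n - k) := by
          apply Finset.sum_congr rfl
          intro k hk
          rw [Finset.mem_range] at hk
          obtain ⟨i, rfl⟩ : ∃ i, m = k + i := ⟨m - k, by omega⟩
          obtain ⟨j, rfl⟩ : ∃ j, n = k + j := ⟨n - k, by omega⟩
          have hsi : k + i - k = i := by omega
          have hsj : k + j - k = j := by omega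
          rw [hsi, hsj]
          simp only [bcG]
          exact (g_term_eq x y hc1 hc2 k i j).symm
  refine ⟨hTs, hbc, ?_⟩
  set e : ℕ × ℕ × ℕ → (ℕ × ℕ) × ℕ := fun t => ((t.1 + t.2.1, t.1 + t.2.2), t.1) with he
  set G : (ℕ × ℕ) × ℕ → ℂ := fun q =>
    if q.2 ≤ min q.1.1 q.1.2 then bcG a b1 b2 c1 c2 x y (q.2, q.1.1 - q.2, q.1.2 - q.2) else 0
    with hGdef
  have he_inj : Function.Injective e := by
    rintro ⟨k, i, j⟩ ⟨k', i', j'⟩ h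
    simp only [he, Prod.mk.injEq] at h
    simp only [Prod.mk.injEq]
    omega
  have hcomp : ∀ t : ℕ × ℕ × ℕ, G (e t) = bcG a b1 b2 c1 c2 x y t := by
    rintro ⟨k, i, j⟩
    simp only [he, hGdef]
    rw [if_pos (le_min (Nat.le_add_right k i) (Nat.le_add_right k j))]
    have hsi : k + i - k = i := by omega
    have hsj : k + j - k = j := by omega
    rw [hsi, hsj]
  have hsupp0 : ∀ q, q ∉ Set.range e → G q = 0 := by
    rintro ⟨⟨m, n⟩, k⟩ hq
    by_contra hne
    apply hq
    have hk : k ≤ min m n := by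
      by_contra hk'
      exact hne (by simp only [hGdef]; rw [if_neg hk'])
    refine ⟨(k, m - k, n - k), ?_⟩
    simp only [he, Prod.mk.injEq]
    exact ⟨⟨by omega, by omega⟩, trivial⟩
  have hsupp : Function.support G ⊆ Set.range e := by
    intro q hq
    by_contra h
    exact hq (hsupp0 q h)
  have hGsum : Summable G := by
    refine (he_inj.summable_iff hsupp0).mp ?_
    have hce : (G ∘ e) = bcG a b1 b2 c1 c2 x y := funext hcomp
    rw [hce]
    exact hg
  rw [appellF2]
  calc (∑' p : ℕ × ℕ,
        (ascPochhammer ℂ (p.1 + p.2)).eval a *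
          (ascPochhammer ℂ p.1).eval b1 * (ascPochhammer ℂ p.2).eval b2 * x ^ p.1 * y ^ p.2 /
          ((Nat.factorial p.1 : ℂ) * (Nat.factorial p.2 : ℂ) *
            (ascPochhammer ℂ p.1).eval c1 * (ascPochhammer ℂ p.2).eval c2))
      = ∑' p : ℕ × ℕ, ∑' k : ℕ, G (p, k) := by
        apply tsum_congr
        intro p
        rw [hTsum p.1 p.2]
        have hz : ∀ k ∉ Finset.range (min p.1 p.2 + 1), G (p, k) = 0 := by
          intro k hk
          rw [Finset.mem_range] at hk
          simp only [hGdef]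
          rw [if_neg (by omega)]
        rw [tsum_eq_sum hz]
        apply Finset.sum_congr rfl
        intro k hk
        rw [Finset.mem_range] at hk
        simp only [hGdef]
        rw [if_pos (by omega : k ≤ min p.1 p.2)]
    _ = ∑' q : (ℕ × ℕ) × ℕ, G q := (Summable.tsum_prod' hGsum fun p => hGsum.prod_factor p).symm
    _ = ∑' t : ℕ × ℕ × ℕ, bcG a b1 b2 c1 c2 x y t := by
        rw [← he_inj.tsum_eq hsupp]
        exact tsum_congr hcomp
    _ = ∑' k : ℕ, ∑' p : ℕ × ℕ, bcG a b1 b2 c1 c2 x y (k, p) :=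
        Summable.tsum_prod' hg fun k => hg.prod_factor k
    _ = ∑' k : ℕ, bcTerm a b1 b2 c1 c2 x y k := by
        apply tsum_congr
        intro k
        calc (∑' p : ℕ × ℕ, bcG a b1 b2 c1 c2 x y (k, p))
            = ∑' p : ℕ × ℕ,
                ((ascPochhammer ℂ k).eval a * (ascPochhammer ℂ k).eval b1 *
                  (ascPochhammer ℂ k).eval b2 /
                  ((Nat.factorial k : ℂ) * (ascPochhammer ℂ k).eval c1 *
                    (ascPochhammer ℂ k).eval c2) * x ^ k * y ^ k) *
                (((ascPochhammer ℂ p.1).eval (a + k) * (ascPochhammer ℂ p.1).eval (b1 + k) *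
                    x ^ p.1 /
                    ((Nat.factorial p.1 : ℂ) * (ascPochhammer ℂ p.1).eval (c1 + k))) *
                  ((ascPochhammer ℂ p.2).eval (a + k) * (ascPochhammer ℂ p.2).eval (b2 + k) *
                    y ^ p.2 /
                    ((Nat.factorial p.2 : ℂ) * (ascPochhammer ℂ p.2).eval (c2 + k)))) := by
              apply tsum_congr
              intro p
              simp only [bcG]
              ring
          _ = ((ascPochhammer ℂ k).eval a * (ascPochhammer ℂ k).eval b1 *
                (ascPochhammer ℂ k).eval b2 /
                ((Nat.factorial k : ℂ) * (ascPochhammer ℂ k).eval c1 *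
                  (ascPochhammer ℂ k).eval c2) * x ^ k * y ^ k) *
              ∑' p : ℕ × ℕ,
                (((ascPochhammer ℂ p.1).eval (a + k) * (ascPochhammer ℂ p.1).eval (b1 + k) *
                    x ^ p.1 /
                    ((Nat.factorial p.1 : ℂ) * (ascPochhammer ℂ p.1).eval (c1 + k))) *
                  ((ascPochhammer ℂ p.2).eval (a + k) * (ascPochhammer ℂ p.2).eval (b2 + k) *
                    y ^ p.2 /
                    ((Nat.factorial p.2 : ℂ) * (ascPochhammer ℂ p.2).eval (c2 + k)))) :=
            tsum_mul_left
          _ = ((ascPochhammer ℂ k).eval a * (ascPochhammer ℂ k).eval b1 *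
                (ascPochhammer ℂ k).eval b2 /
                ((Nat.factorial k : ℂ) * (ascPochhammer ℂ k).eval c1 *
                  (ascPochhammer ℂ k).eval c2) * x ^ k * y ^ k) *
              ((∑' i : ℕ, (ascPochhammer ℂ i).eval (a + k) * (ascPochhammer ℂ i).eval (b1 + k) *
                  x ^ i / ((Nat.factorial i : ℂ) * (ascPochhammer ℂ i).eval (c1 + k))) *
                (∑' j : ℕ, (ascPochhammer ℂ j).eval (a + k) * (ascPochhammer ℂ j).eval (b2 + k) *
                  y ^ j / ((Nat.factorial j : ℂ) * (ascPochhammer ℂ j).eval (c2 + k)))) := by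
            rw [tsum_mul_tsum_of_summable_norm (husum' k) (hvsum' k)]
          _ = bcTerm a b1 b2 c1 c2 x y k := by
            rw [bcTerm, gaussF, gaussF]
            ring
end

section
/- For ξ_k = (r² − r_k²)/r² and ξ_l = (r² − r_l²)/r² with k ≠ l (notation as below), the gradients satisfy ∑_{i=1}^{m} (∂ξ_k/∂x_i)(∂ξ_l/∂x_i) = (2/r²)( x_{0k}/x_k + x_{0l}/x_l ) ξ_k ξ_l. -/
open Finset

/-- Partial derivative in the i-th coordinate direction. -/
noncomputable def pd {m : ℕ} (i : Fin m) (f : (Fin m → ℝ) → ℝ) (x : Fin m → ℝ) : ℝ :=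
  fderiv ℝ f x (Pi.single i 1)

/-- r² = ∑ (x_i − x₀ᵢ)². -/
def r2 {m : ℕ} (x0 x : Fin m → ℝ) : ℝ := ∑ i : Fin m, (x i - x0 i) ^ 2

/-- r_k² = (x_k + x₀ₖ)² + ∑_{i≠k} (x_i − x₀ᵢ)². -/
def rk2 {m : ℕ} (x0 : Fin m → ℝ) (k : Fin m) (x : Fin m → ℝ) : ℝ :=
  (x k + x0 k) ^ 2 + ∑ i ∈ univ \ {k}, (x i - x0 i) ^ 2

/-- ξ_k = (r² − r_k²)/r². -/
noncomputable def xi {m : ℕ} (x0 : Fin m → ℝ) (k : Fin m) (x : Fin m → ℝ) : ℝ :=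
  (r2 x0 x - rk2 x0 k x) / r2 x0 x

lemma xi_eq {m : ℕ} (x0 : Fin m → ℝ) (k : Fin m) (x : Fin m → ℝ) :
    xi x0 k x = (-(4 * x0 k) * x k) / r2 x0 x := by
  unfold xi rk2
  have h : r2 x0 x = (x k - x0 k)^2 + ∑ i ∈ univ \ {k}, (x i - x0 i) ^ 2 := by
    unfold r2
    rw [Finset.sum_eq_sum_sdiff_singleton_add (Finset.mem_univ k) (fun i => (x i - x0 i)^2)]
    ring
  rw [h]
  congr 1
  ring

lemma hasFDerivAt_r2 {m : ℕ} (x0 x : Fin m → ℝ) :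
    HasFDerivAt (r2 x0)
      (∑ i : Fin m, (2 * (x i - x0 i)) • (ContinuousLinearMap.proj i : (Fin m → ℝ) →L[ℝ] ℝ)) x := by
  have h : ∀ i : Fin m, HasFDerivAt (fun y : Fin m → ℝ => (y i - x0 i)^2)
      ((2*(x i - x0 i)) • (ContinuousLinearMap.proj i : (Fin m → ℝ) →L[ℝ] ℝ)) x := by
    intro i
    have h1 : HasFDerivAt (fun y : Fin m → ℝ => y i - x0 i)
        (ContinuousLinearMap.proj i : (Fin m → ℝ) →L[ℝ] ℝ) x :=
      (hasFDerivAt_apply i x).sub_const _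
    have h2 := h1.mul h1
    have e : (fun y : Fin m → ℝ => (y i - x0 i)^2) = ((fun y => y i - x0 i) * fun y => y i - x0 i) := by
      ext y; simp only [Pi.mul_apply]; ring
    rw [e]
    exact h2.congr_fderiv (by rw [two_mul, add_smul])
  exact HasFDerivAt.fun_sum (u := Finset.univ) (fun i _ => h i)

lemma pd_xi {m : ℕ} (x0 x : Fin m → ℝ) (k i : Fin m) (hr : r2 x0 x ≠ 0) :
    pd i (xi x0 k) x =
      ((-(4 * x0 k)) * (if i = k then 1 else 0) * r2 x0 x
        - (-(4 * x0 k) * x k) * (2 * (x i - x0 i))) / (r2 x0 x) ^ 2 := by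
  set c : ℝ := -(4 * x0 k) with hc
  set D := (∑ j : Fin m, (2 * (x j - x0 j)) • (ContinuousLinearMap.proj j : (Fin m → ℝ) →L[ℝ] ℝ))
    with hD
  have hden := hasFDerivAt_r2 x0 x
  have hnum : HasFDerivAt (fun y : Fin m → ℝ => c * y k)
      (c • (ContinuousLinearMap.proj k : (Fin m → ℝ) →L[ℝ] ℝ)) x := by
    simpa using (hasFDerivAt_apply k x).const_mul c
  have hinv : HasFDerivAt (fun y : Fin m → ℝ => (r2 x0 y)⁻¹)
      ((-((r2 x0 x)⁻¹ * (r2 x0 x)⁻¹)) • D) x := by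
    have h2 := (hasFDerivAt_inv' (𝕜 := ℝ) hr).comp x hden
    refine h2.congr_fderiv ?_
    ext v
    simp [hD, ContinuousLinearMap.sum_apply, ContinuousLinearMap.smul_apply,
      ContinuousLinearMap.proj_apply, ContinuousLinearMap.mulLeftRight_apply, Finset.mul_sum]
    exact Finset.sum_congr rfl fun j _ => by ring
  have hprod : HasFDerivAt (fun y => (c * y k) * (r2 x0 y)⁻¹) _ x := hnum.mul hinv
  have hxi : xi x0 k = fun y => (c * y k) * (r2 x0 y)⁻¹ :=
    funext fun y => by rw [xi_eq, div_eq_mul_inv]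
  rw [pd, hxi, hprod.fderiv]
  have hDv : D (Pi.single i 1) = 2 * (x i - x0 i) := by
    simp [hD, ContinuousLinearMap.proj_apply, Pi.single_apply, mul_ite, Finset.sum_ite_eq]
  simp only [ContinuousLinearMap.add_apply, ContinuousLinearMap.smul_apply,
    ContinuousLinearMap.proj_apply, hDv, Pi.single_apply, smul_eq_mul]
  by_cases h : i = k
  · subst h; simp; field_simp; ring
  · simp [h, Ne.symm h, div_eq_mul_inv, mul_inv, pow_two]; ring

/-- ∑_i (∂ξ_k/∂x_i)(∂ξ_l/∂x_i) = (2/r²)(x₀ₖ/xₖ + x₀ₗ/xₗ) ξ_k ξ_l for k ≠ l. -/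
theorem grad_xi_dot (m : ℕ) (x0 x : Fin m → ℝ) (k l : Fin m) (hkl : k ≠ l)
    (hxk : 0 < x k) (hx0k : 0 < x0 k) (hxl : 0 < x l) (hx0l : 0 < x0 l)
    (hr : r2 x0 x ≠ 0) :
    ∑ i : Fin m, pd i (xi x0 k) x * pd i (xi x0 l) x =
      (2 / r2 x0 x) * (x0 k / x k + x0 l / x l) * xi x0 k x * xi x0 l x := by
  set R := r2 x0 x with hR
  set ck : ℝ := -(4 * x0 k)
  set cl : ℝ := -(4 * x0 l)
  set αk : ℝ := -ck * (cl * x l) * (2 * (x k - x0 k)) / R ^ 3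
  set αl : ℝ := -cl * (ck * x k) * (2 * (x l - x0 l)) / R ^ 3
  set γ : ℝ := (ck * x k) * (cl * x l) * 4 / R ^ 4
  have key : ∀ i : Fin m, pd i (xi x0 k) x * pd i (xi x0 l) x =
      (if i = k then αk else 0) + (if i = l then αl else 0) + γ * (x i - x0 i) ^ 2 := by
    intro i
    rw [pd_xi x0 x k i hr, pd_xi x0 x l i hr, ← hR]
    by_cases h1 : i = k
    · subst h1
      simp only [if_pos rfl, ↓reduceIte, if_neg hkl, αk, γ]
      field_simp
      ring
    · by_cases h2 : i = l
      · subst h2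
        simp only [if_pos rfl, ↓reduceIte, if_neg h1, αl, γ]
        field_simp
        ring
      · simp only [if_neg h1, if_neg h2, γ]
        field_simp
        ring
  rw [Finset.sum_congr rfl fun i _ => key i]
  rw [Finset.sum_add_distrib, Finset.sum_add_distrib, ← Finset.mul_sum]
  simp only [Finset.sum_ite_eq' Finset.univ, Finset.mem_univ, if_pos]
  have hsum : ∑ i : Fin m, (x i - x0 i) ^ 2 = R := rfl
  rw [hsum, xi_eq, xi_eq, ← hR]
  have hxk' := hxk.ne'
  have hxl' := hxl.ne'
  simp only [αk, αl, γ]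
  field_simp
  ring
end

section
/- For P(r) = (r²)^{−α} with r² = ∑_{i=1}^m (x_i − x_{0i})² and α = α_1 + ⋯ + α_n − 1 + m/2, the function P satisfies ∑_{i=1}^{m} ∂²P/∂x_i² + 2 ∑_{j=1}^{n} (α_j/x_j) ∂P/∂x_j = (4α/r²) P(r) ∑_{j=1}^{n} (x_{0j}/x_j) α_j. -/
open Finset

/-- P(x) = (r²)^{−α}. -/
noncomputable def Pfun {m : ℕ} (x0 : Fin m → ℝ) (α : ℝ) (x : Fin m → ℝ) : ℝ :=
  Real.rpow (r2 x0 x) (-α)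


noncomputable def r2d {m : ℕ} (x0 x : Fin m → ℝ) : (Fin m → ℝ) →L[ℝ] ℝ :=
  ∑ i : Fin m, (2 * (x i - x0 i)) • ContinuousLinearMap.proj i

lemma hasFDerivAt_r2_s13 {m : ℕ} (x0 x : Fin m → ℝ) :
    HasFDerivAt (r2 x0) (r2d x0 x) x := by
  unfold r2 r2d
  apply HasFDerivAt.fun_sum
  intro i _
  have h1 : HasFDerivAt (fun y : Fin m → ℝ => y i - x0 i)
      ((ContinuousLinearMap.proj i : (Fin m → ℝ) →L[ℝ] ℝ)) x := by
    simpa using (hasFDerivAt_apply i x).sub_const (x0 i)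
  have h2 := h1.fun_mul h1
  have : (x i - x0 i) • (ContinuousLinearMap.proj i : (Fin m → ℝ) →L[ℝ] ℝ) +
      (x i - x0 i) • ContinuousLinearMap.proj i
      = (2 * (x i - x0 i)) • ContinuousLinearMap.proj i := by
    rw [← add_smul]; ring_nf
  rw [this] at h2
  simpa [pow_two] using h2

lemma r2d_apply {m : ℕ} (x0 x : Fin m → ℝ) (i : Fin m) :
    r2d x0 x (Pi.single i 1) = 2 * (x i - x0 i) := by
  unfold r2d
  simp [ContinuousLinearMap.sum_apply, Pi.single_apply, apply_ite]

lemma hasFDerivAt_rpow_r2 {m : ℕ} (x0 x : Fin m → ℝ) (β : ℝ) (h : 0 < r2 x0 x) :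
    HasFDerivAt (fun y => r2 x0 y ^ β)
      ((β * r2 x0 x ^ (β - 1)) • r2d x0 x) x := by
  have hg : HasDerivAt (fun t : ℝ => t ^ β) (β * r2 x0 x ^ (β - 1)) (r2 x0 x) :=
    Real.hasDerivAt_rpow_const (Or.inl h.ne')
  exact hg.comp_hasFDerivAt x (hasFDerivAt_r2_s13 x0 x)

lemma pd_rpow_r2 {m : ℕ} (x0 x : Fin m → ℝ) (β : ℝ) (h : 0 < r2 x0 x) (i : Fin m) :
    pd i (fun y => r2 x0 y ^ β) x = β * r2 x0 x ^ (β - 1) * (2 * (x i - x0 i)) := by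
  unfold pd
  rw [(hasFDerivAt_rpow_r2 x0 x β h).fderiv]
  simp [r2d_apply]

lemma pd_Pfun {m : ℕ} (x0 x : Fin m → ℝ) (α : ℝ) (h : 0 < r2 x0 x) (i : Fin m) :
    pd i (Pfun x0 α) x = -α * r2 x0 x ^ (-α - 1) * (2 * (x i - x0 i)) := by
  have := pd_rpow_r2 x0 x (-α) h i
  simpa [show Pfun x0 α = fun y => r2 x0 y ^ (-α) from rfl, Real.rpow_def_of_pos, sub_eq_add_neg] using this

lemma continuous_r2 {m : ℕ} (x0 : Fin m → ℝ) : Continuous (r2 x0) := by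
  unfold r2
  exact continuous_finset_sum _ fun i _ => ((continuous_apply i).sub continuous_const).pow 2

lemma pd_pd_Pfun {m : ℕ} (x0 x : Fin m → ℝ) (α : ℝ) (h : 0 < r2 x0 x) (i : Fin m) :
    pd i (pd i (Pfun x0 α)) x =
      -α * r2 x0 x ^ (-α - 1) * 2 +
        α * (α + 1) * r2 x0 x ^ (-α - 2) * (2 * (x i - x0 i)) ^ 2 := by
  set G : (Fin m → ℝ) → ℝ :=
    fun y => -α * r2 x0 y ^ (-α - 1) * (2 * (y i - x0 i)) with hG
  have hev : pd i (Pfun x0 α) =ᶠ[nhds x] G := by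
    have hopen : IsOpen {y : Fin m → ℝ | 0 < r2 x0 y} :=
      isOpen_lt continuous_const (continuous_r2 x0)
    filter_upwards [hopen.mem_nhds h] with y hy
    rw [pd_Pfun x0 y α hy]
  have hd2 : HasFDerivAt G
      (((-α * r2 x0 x ^ (-α - 1)) • ((2:ℝ) • (ContinuousLinearMap.proj i : (Fin m → ℝ) →L[ℝ] ℝ))) +
        ((2 * (x i - x0 i)) • ((-α) • (((-α - 1) * r2 x0 x ^ (-α - 1 - 1)) • r2d x0 x)))) x := by
    have hc : HasFDerivAt (fun y => -α * r2 x0 y ^ (-α - 1))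
        ((-α) • (((-α - 1) * r2 x0 x ^ (-α - 1 - 1)) • r2d x0 x)) x :=
      (hasFDerivAt_rpow_r2 x0 x (-α - 1) h).const_mul (-α)
    have hd : HasFDerivAt (fun y : Fin m → ℝ => 2 * (y i - x0 i))
        ((2:ℝ) • (ContinuousLinearMap.proj i : (Fin m → ℝ) →L[ℝ] ℝ)) x := by
      have h1 : HasFDerivAt (fun y : Fin m → ℝ => y i - x0 i)
          ((ContinuousLinearMap.proj i : (Fin m → ℝ) →L[ℝ] ℝ)) x := by
        simpa using (hasFDerivAt_apply i x).sub_const (x0 i)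
      exact h1.const_mul 2
    exact hc.mul hd
  have heq : pd i (pd i (Pfun x0 α)) x = pd i G x := by
    show fderiv ℝ (pd i (Pfun x0 α)) x (Pi.single i 1) = fderiv ℝ G x (Pi.single i 1)
    rw [hev.fderiv_eq]
  rw [heq]
  unfold pd
  rw [hd2.fderiv]
  have hr : (-α - 1 - 1 : ℝ) = -α - 2 := by ring
  simp [r2d_apply, hr]
  ring

/-- With α = α₁+⋯+αₙ − 1 + m/2 :
 ∑ᵢ ∂²P/∂xᵢ² + 2 ∑ⱼ (αⱼ/xⱼ)∂P/∂xⱼ = (4α/r²) P ∑ⱼ (x₀ⱼ/xⱼ)αⱼ. -/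
theorem P_identity (m n : ℕ) (hnm : n ≤ m) (αv : Fin n → ℝ) (x0 x : Fin m → ℝ)
    (hx : x ≠ x0) (hpos : ∀ j : Fin n, 0 < x (Fin.castLE hnm j))
    (α : ℝ) (hα : α = (∑ j : Fin n, αv j) - 1 + (m : ℝ) / 2) :
    (∑ i : Fin m, pd i (pd i (Pfun x0 α)) x) +
      2 * ∑ j : Fin n, (αv j / x (Fin.castLE hnm j)) * pd (Fin.castLE hnm j) (Pfun x0 α) x =
    (4 * α / r2 x0 x) * Pfun x0 α x *
      ∑ j : Fin n, (x0 (Fin.castLE hnm j) / x (Fin.castLE hnm j)) * αv j := by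
  have hs : 0 < r2 x0 x := by
    obtain ⟨i, hi⟩ : ∃ i, x i ≠ x0 i := by
      by_contra hc; push_neg at hc; exact hx (funext hc)
    exact Finset.sum_pos' (fun i _ => sq_nonneg _)
      ⟨i, Finset.mem_univ i, pow_two_pos_of_ne_zero (sub_ne_zero.mpr hi)⟩
  have hsne : r2 x0 x ≠ 0 := hs.ne'
  have h1 : r2 x0 x ^ (-α - 2) * r2 x0 x = r2 x0 x ^ (-α - 1) := by
    rw [← Real.rpow_add_one hsne]; ring_nf
  have h2 : Pfun x0 α x = r2 x0 x ^ (-α - 1) * r2 x0 x := by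
    show r2 x0 x ^ (-α) = _
    rw [← Real.rpow_add_one hsne]; ring_nf
  have h4 : ∑ i : Fin m, (2 * (x i - x0 i)) ^ 2 = 4 * r2 x0 x := by
    unfold r2
    rw [Finset.mul_sum]
    exact Finset.sum_congr rfl fun i _ => by ring
  have hsum1 : ∑ i : Fin m, pd i (pd i (Pfun x0 α)) x
      = (m : ℝ) * (-2 * α * r2 x0 x ^ (-α - 1)) + 4 * α * (α + 1) * r2 x0 x ^ (-α - 1) := by
    rw [Finset.sum_congr rfl (fun i _ => pd_pd_Pfun x0 x α hs i), Finset.sum_add_distrib,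
      Finset.sum_const, Finset.card_univ, Fintype.card_fin, ← Finset.mul_sum, h4,
      nsmul_eq_mul]
    linear_combination (4 * α * (α + 1)) * h1
  have hsum2 : ∑ j : Fin n, (αv j / x (Fin.castLE hnm j)) * pd (Fin.castLE hnm j) (Pfun x0 α) x
      = -2 * α * r2 x0 x ^ (-α - 1) * (∑ j : Fin n, αv j)
        + 2 * α * r2 x0 x ^ (-α - 1) *
          (∑ j : Fin n, (x0 (Fin.castLE hnm j) / x (Fin.castLE hnm j)) * αv j) := by
    rw [Finset.mul_sum, Finset.mul_sum, ← Finset.sum_add_distrib]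
    refine Finset.sum_congr rfl fun j _ => ?_
    rw [pd_Pfun x0 x α hs]
    have hxj : x (Fin.castLE hnm j) ≠ 0 := (hpos j).ne'
    field_simp
    ring
  rw [hsum1, hsum2, h2]
  generalize r2 x0 x ^ (-α - 1) = A
  subst hα
  field_simp
  ring
end
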